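/- Let Φ : M_d(ℂ) → M_d(ℂ) be a linear map and let its Choi matrix J_Φ ∈ M_d(ℂ) ⊗ M_d(ℂ) be defined entrywise by J_Φ((i,k),(j,l)) = (1/d)·Φ(|i⟩⟨j|)(k,l). Then J_Φ is positive semidefinite if and only if Φ is completely positive, i.e., if and only if there exists a finite family of matrices K_a ∈ M_d(ℂ) such that Φ(X) = ∑_a K_a X K_aᴴ for all X ∈ M_d(ℂ). -/

import Mathlib

open Matrix ComplexOrder

/-- The Choi matrix of a linear map `Φ : M_d(ℂ) → M_d(ℂ)`, with entries
`J_Φ((i,k),(j,l)) = (1/d) · Φ(|i⟩⟨j|)(k,l)`. -/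
noncomputable def choiMatrix (d : ℕ)
    (Φ : Matrix (Fin d) (Fin d) ℂ →ₗ[ℂ] Matrix (Fin d) (Fin d) ℂ) :
    Matrix (Fin d × Fin d) (Fin d × Fin d) ℂ :=
  Matrix.of fun p q => (1 / (d : ℂ)) * Φ (Matrix.single p.1 q.1 1) p.2 q.2

private lemma mul_std_mul_conjTranspose {d : ℕ} (K : Matrix (Fin d) (Fin d) ℂ)
    (i j k l : Fin d) :
    ((K * Matrix.single i j 1 * Kᴴ : Matrix (Fin d) (Fin d) ℂ)) k l
      = K k i * star (K l j) := by
  rw [Matrix.mul_apply]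
  have h : ∀ s, (K * Matrix.single i j 1 : Matrix (Fin d) (Fin d) ℂ) k s * Kᴴ s l
      = (if j = s then K k i * star (K l j) else 0) := by
    intro s
    rw [show (K * Matrix.single i j 1 : Matrix (Fin d) (Fin d) ℂ) k s
      = ∑ t, K k t * Matrix.single i j 1 t s from Matrix.mul_apply]
    simp only [Matrix.single, Matrix.of_apply, Matrix.conjTranspose_apply, ite_and,
      mul_ite, mul_one, mul_zero, Finset.sum_ite_eq, Finset.mem_univ, if_true]
    split_ifs with hs
    · subst hs; ring
    · ring
  calc ∑ s, (K * Matrix.single i j 1 : Matrix (Fin d) (Fin d) ℂ) k s * Kᴴ s l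
      = ∑ s, (if j = s then K k i * star (K l j) else 0) :=
        Finset.sum_congr rfl fun s _ => h s
    _ = K k i * star (K l j) := by simp

/-- The Kraus form holds for all matrices as soon as it holds on the standard basis. -/
private lemma kraus_of_basis {d n : ℕ}
    (Φ : Matrix (Fin d) (Fin d) ℂ →ₗ[ℂ] Matrix (Fin d) (Fin d) ℂ)
    (K : Fin n → Matrix (Fin d) (Fin d) ℂ)
    (h : ∀ i j : Fin d,
      Φ (Matrix.single i j 1) = ∑ a, K a * Matrix.single i j 1 * (K a)ᴴ) :
    ∀ X, Φ X = ∑ a, K a * X * (K a)ᴴ := by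
  have hΨ : ∃ Ψ : Matrix (Fin d) (Fin d) ℂ →ₗ[ℂ] Matrix (Fin d) (Fin d) ℂ,
      ∀ X, Ψ X = ∑ a, K a * X * (K a)ᴴ := by
    refine ⟨{ toFun := fun X => ∑ a, K a * X * (K a)ᴴ,
              map_add' := fun X Y => by
                simp [mul_add, add_mul, Finset.sum_add_distrib],
              map_smul' := fun c X => by
                simp [Finset.smul_sum, Matrix.mul_smul, Matrix.smul_mul] },
          fun _ => rfl⟩
  obtain ⟨Ψ, hΨ⟩ := hΨ
  have hfeq : Φ = Ψ := by
    apply (Matrix.stdBasis ℂ (Fin d) (Fin d)).ext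
    rintro ⟨i, j⟩
    rw [Matrix.stdBasis_eq_single, hΨ, h]
  intro X
  rw [hfeq, hΨ]

/-- **Choi's theorem**: the Choi matrix `J_Φ` is positive semidefinite if and only if
`Φ` is completely positive, i.e. admits a Kraus decomposition
`Φ(X) = ∑ₐ Kₐ X Kₐᴴ`. -/
theorem choi_posSemidef_iff_completelyPositive (d : ℕ)
    (Φ : Matrix (Fin d) (Fin d) ℂ →ₗ[ℂ] Matrix (Fin d) (Fin d) ℂ) :
    (choiMatrix d Φ).PosSemidef ↔
    ∃ (n : ℕ) (K : Fin n → Matrix (Fin d) (Fin d) ℂ),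
      ∀ X : Matrix (Fin d) (Fin d) ℂ, Φ X = ∑ a, K a * X * (K a)ᴴ := by
  rcases Nat.eq_zero_or_pos d with hd | hd
  · subst hd
    constructor
    · intro _
      refine ⟨0, fun _ => 0, fun X => ?_⟩
      apply Subsingleton.elim
    · intro _
      have h0 : choiMatrix 0 Φ = 0 := Subsingleton.elim _ _
      rw [h0]
      exact Matrix.PosSemidef.zero
  have hd0 : (d : ℂ) ≠ 0 := Nat.cast_ne_zero.mpr hd.ne'
  constructor
  · -- forward: PSD ⇒ Kraus
    intro h
    obtain ⟨B, hB⟩ : ∃ B : Matrix (Fin d × Fin d) (Fin d × Fin d) ℂ, choiMatrix d Φ = Bᴴ * B := by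
      open scoped MatrixOrder Matrix.Norms.L2Operator in
      exact CStarAlgebra.nonneg_iff_eq_star_mul_self.mp h.nonneg
    set e := finProdFinEquiv (m := d) (n := d) with he
    refine ⟨d * d, fun b =>
      Matrix.of fun k i => (Real.sqrt d : ℂ) * star (B (e.symm b) (i, k)), ?_⟩
    apply kraus_of_basis
    intro i j
    ext k l
    have h1 : (1 / (d : ℂ)) * Φ (Matrix.single i j 1) k l
        = (Bᴴ * B) (i, k) (j, l) := by
      rw [← hB]; rfl
    have hJ : Φ (Matrix.single i j 1) k l
        = (d : ℂ) * ((Bᴴ * B) (i, k) (j, l)) := by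
      rw [← h1]; field_simp
    rw [hJ, Matrix.mul_apply, Matrix.sum_apply, Finset.mul_sum]
    have hs : (Real.sqrt d : ℂ) * (Real.sqrt d : ℂ) = (d : ℂ) := by
      rw [← Complex.ofReal_mul, Real.mul_self_sqrt (Nat.cast_nonneg d)]
      simp
    refine Fintype.sum_equiv e _ _ fun p => ?_
    rw [mul_std_mul_conjTranspose]
    simp only [Matrix.of_apply, Equiv.symm_apply_apply, Matrix.conjTranspose_apply,
      star_mul', star_star, Complex.star_def, Complex.conj_ofReal, Complex.conj_conj]
    rw [← hs]
    ring
  · -- backward: Kraus ⇒ PSD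
    rintro ⟨n, K, hK⟩
    have hJ : choiMatrix d Φ
        = ∑ a : Fin n, (Matrix.of fun (_ : Fin 1) (q : Fin d × Fin d) =>
            ((Real.sqrt (1 / d) : ℂ)) * star (K a q.2 q.1))ᴴ *
          (Matrix.of fun (_ : Fin 1) (q : Fin d × Fin d) =>
            ((Real.sqrt (1 / d) : ℂ)) * star (K a q.2 q.1)) := by
      ext p q
      rw [Matrix.sum_apply]
      show (1 / (d : ℂ)) * Φ (Matrix.single p.1 q.1 1) p.2 q.2 = _
      rw [hK, Matrix.sum_apply, Finset.mul_sum]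
      apply Finset.sum_congr rfl
      intro a _
      rw [mul_std_mul_conjTranspose, Matrix.mul_apply]
      rw [Fin.sum_univ_one, Matrix.conjTranspose_apply, Matrix.of_apply, Matrix.of_apply]
      have hs : (Real.sqrt (1 / d) : ℂ) * (Real.sqrt (1 / d) : ℂ) = 1 / (d : ℂ) := by
        rw [← Complex.ofReal_mul, Real.mul_self_sqrt (by positivity)]
        push_cast; ring
      rw [star_mul', star_star, Complex.star_def, Complex.conj_ofReal]
      rw [← hs]; ring
    rw [hJ]
    apply Finset.sum_induction _ Matrix.PosSemidef (fun _ _ => Matrix.PosSemidef.add)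
      Matrix.PosSemidef.zero
    intro a _
    exact Matrix.posSemidef_conjTranspose_mul_self _
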